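/- If φ₀ : Γ → ℝ is a quasimorphism with φ₀(e)=0 which is not at bounded distance from any homomorphism, then the orbit closure Δ_{φ₀} of φ₀ (under the action (γ.φ)(γ') = φ(γ'γ) - φ(γ), in the product topology on ℝ^Γ) does not admit a Γ-invariant Borel probability measure. -/

import Mathlib

open MeasureTheory

/-- If the quasimorphism `φ₀` (with `φ₀(e) = 0`) is not at bounded distance
from a homomorphism, then the orbit closure `Δ_{φ₀}` of `φ₀` under the action
`(γ.φ)(γ') = φ(γ'γ) - φ(γ)` (product topology on `ℝ^Γ`) carries no
`Γ`-invariant Borel probability measure. -/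
theorem stmt5 {Γ : Type*} [Group Γ] [Countable Γ]
    (φ₀ : Γ → ℝ) (hφ₀e : φ₀ 1 = 0)
    (hqm : ∃ D : ℝ, ∀ g h : Γ, |φ₀ (g * h) - φ₀ g - φ₀ h| ≤ D)
    (hnontriv : ¬ ∃ (h : Γ → ℝ), (∀ a b, h (a * b) = h a + h b) ∧
      ∃ C : ℝ, ∀ γ, |φ₀ γ - h γ| ≤ C)
    (act : Γ → (Γ → ℝ) → (Γ → ℝ))
    (hact : ∀ γ ψ γ', act γ ψ γ' = ψ (γ' * γ) - ψ γ) :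
    ¬ ∃ μ : Measure (Γ → ℝ), IsProbabilityMeasure μ ∧
        (∀ᵐ ψ ∂μ, ψ ∈ closure {ψ' : Γ → ℝ | ∃ γ : Γ, ψ' = act γ φ₀}) ∧
        (∀ γ : Γ, Measure.map (act γ) μ = μ) := by
  rintro ⟨μ, hprob, hsupp, hinv⟩
  obtain ⟨D, hD⟩ := hqm
  -- the closed set of functions at sup-distance ≤ D from φ₀
  set S : Set (Γ → ℝ) := {ψ | ∀ a, |ψ a - φ₀ a| ≤ D} with hSdef
  have hSclosed : IsClosed S := by
    have : S = ⋂ a, {ψ : Γ → ℝ | |ψ a - φ₀ a| ≤ D} := by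
      ext ψ; simp [hSdef]
    rw [this]
    exact isClosed_iInter fun a =>
      isClosed_le (((continuous_apply a).sub continuous_const).abs) continuous_const
  -- the orbit lies in S
  have horb : {ψ' : Γ → ℝ | ∃ γ : Γ, ψ' = act γ φ₀} ⊆ S := by
    rintro ψ' ⟨γ, rfl⟩ a
    have := hD a γ
    rw [hact]
    calc |φ₀ (a * γ) - φ₀ γ - φ₀ a| = |φ₀ (a * γ) - φ₀ a - φ₀ γ| := by ring_nf
    _ ≤ D := hD a γ
  have hclos : closure {ψ' : Γ → ℝ | ∃ γ : Γ, ψ' = act γ φ₀} ⊆ S :=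
    closure_minimal horb hSclosed
  have hmem : ∀ᵐ ψ ∂μ, ψ ∈ S := hsupp.mono fun ψ hψ => hclos hψ
  -- integrability of evaluations
  have hInt : ∀ a : Γ, Integrable (fun ψ : Γ → ℝ => ψ a) μ := by
    intro a
    refine (integrable_const (|φ₀ a| + D)).mono'
      (measurable_pi_apply a).aestronglyMeasurable ?_
    refine hmem.mono fun ψ hψ => ?_
    have h1 : |ψ a - φ₀ a| ≤ D := hψ a
    have : |ψ a| ≤ |φ₀ a| + |ψ a - φ₀ a| := by
      calc |ψ a| = |φ₀ a + (ψ a - φ₀ a)| := by ring_nf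
      _ ≤ |φ₀ a| + |ψ a - φ₀ a| := abs_add_le _ _
    simpa [Real.norm_eq_abs] using this.trans (by linarith)
  set h : Γ → ℝ := fun a => ∫ ψ, ψ a ∂μ with hhdef
  have hactmeas : ∀ b : Γ, Measurable (act b) := by
    intro b
    have : act b = fun ψ : Γ → ℝ => fun a => ψ (a * b) - ψ b := by
      funext ψ a; exact hact b ψ a
    rw [this]
    exact measurable_pi_lambda _ fun a =>
      (measurable_pi_apply (a * b)).sub (measurable_pi_apply b)
  have hadd : ∀ a b : Γ, h (a * b) = h a + h b := by
    intro a b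
    have key : h a = h (a * b) - h b := by
      calc h a = ∫ ψ, ψ a ∂μ := rfl
      _ = ∫ ψ, ψ a ∂(Measure.map (act b) μ) := by rw [hinv b]
      _ = ∫ ψ, (act b ψ) a ∂μ := by
          exact integral_map (hactmeas b).aemeasurable
            (measurable_pi_apply a).aestronglyMeasurable
      _ = ∫ ψ, (ψ (a * b) - ψ b) ∂μ := by
          congr 1; funext ψ; rw [hact]
      _ = (∫ ψ, ψ (a * b) ∂μ) - ∫ ψ, ψ b ∂μ := integral_sub (hInt (a * b)) (hInt b)
      _ = h (a * b) - h b := rfl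
    linarith
  have hbound : ∀ a : Γ, |φ₀ a - h a| ≤ D := by
    intro a
    have : φ₀ a - h a = ∫ ψ, (φ₀ a - ψ a) ∂μ := by
      rw [integral_sub (integrable_const _) (hInt a), integral_const]
      simp
      rfl
    rw [this]
    have := norm_integral_le_of_norm_le_const (μ := μ)
      (f := fun ψ : Γ → ℝ => φ₀ a - ψ a) (C := D)
      (hmem.mono fun ψ hψ => by
        simpa [Real.norm_eq_abs, abs_sub_comm] using hψ a)
    simpa [Real.norm_eq_abs] using this
  exact hnontriv ⟨h, hadd, D, hbound⟩
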